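/- Let λ be an infinite regular cardinal and X a linearly ordered set of cardinality λ such that there exists Y ⊆ X with |Y| = λ and for every y ∈ Y exactly one of {z ∈ Y : z < y}, {z ∈ Y : z > y} has cardinality < λ. Then X contains a subset of order type λ or a subset of reverse order type λ. -/

import Mathlib

open Cardinal Set

universe u

/-- `Y` is `l`-full on the right in `X`: for every `y ∈ Y`, the union of the
intervals `(y, y')_X` over larger elements `y' ∈ Y` has cardinality `l`. -/
def FullRight {X : Type u} [LinearOrder X] (l : Cardinal.{u}) (Y : Set X) : Prop :=
  ∀ y ∈ Y, #{x : X | ∃ y' ∈ Y, y < y' ∧ y < x ∧ x < y'} = l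

/-- `Y` is `l`-full on the left in `X`. -/
def FullLeft {X : Type u} [LinearOrder X] (l : Cardinal.{u}) (Y : Set X) : Prop :=
  ∀ y ∈ Y, #{x : X | ∃ y' ∈ Y, y' < y ∧ y' < x ∧ x < y} = l

/-- `Y` is completely `l`-full in `X`: every interval of `X` between two
elements of `Y` has cardinality `l`. -/
def CompletelyFull {X : Type u} [LinearOrder X] (l : Cardinal.{u}) (Y : Set X) : Prop :=
  ∀ y ∈ Y, ∀ y' ∈ Y, y < y' → #{x : X | y < x ∧ x < y'} = l

/-- Case (1) of Theorem 2.2: if some `Y ⊆ X` of cardinality `l` is such that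
each of its points has exactly one small side in `Y`, then `X` has a subset of
order type `l` or of reverse order type `l`. -/
lemma myAbove {X : Type u} [LinearOrder X] {l : Cardinal.{u}} (hl : l.IsRegular)
    {A : Set X} (hA : #A = l) (hsmall : ∀ a ∈ A, #{z ∈ A | z < a} < l) :
    ∀ S : Set X, #S < l → ∃ a ∈ A, ∀ s ∈ S, s ∈ A → s < a := by
  intro S hS
  set T : Set X := (S ∩ A) ∪ ⋃ s ∈ S ∩ A, {z ∈ A | z < s} with hTdef
  have hSA : #(S ∩ A : Set X) < l := (mk_le_mk_of_subset inter_subset_left).trans_lt hS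
  have hT : #T < l := by
    refine lt_of_le_of_lt (mk_union_le _ _) (add_lt_of_lt hl.1 hSA ?_)
    rw [Cardinal.card_biUnion_lt_iff_forall_of_isRegular hl hSA]
    exact fun s hs => hsmall s hs.2
  have : ¬ A ⊆ T := fun h => absurd ((mk_le_mk_of_subset h).trans_lt hT) (by rw [hA]; exact lt_irrefl l)
  obtain ⟨a, haA, haT⟩ := not_subset.1 this
  refine ⟨a, haA, fun s hsS hsA => ?_⟩
  rcases lt_trichotomy s a with h | h | h
  · exact h
  · refine absurd ?_ haT
    exact mem_union_left _ (show a ∈ S ∩ A from ⟨h ▸ hsS, haA⟩)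
  · refine absurd ?_ haT
    exact mem_union_right _ (mem_biUnion (show s ∈ S ∩ A from ⟨hsS, hsA⟩)
      (show a ∈ {z ∈ A | z < s} from ⟨haA, h⟩))

lemma myMono {X : Type u} [LinearOrder X] {l : Cardinal.{u}} (hl : l.IsRegular)
    {A : Set X} (hA : #A = l) (hsmall : ∀ a ∈ A, #{z ∈ A | z < a} < l) :
    ∃ f : l.ord.ToType → X, StrictMono f := by
  classical
  obtain ⟨g, hg⟩ := Classical.axiomOfChoice (fun S : {S : Set X // #S < l} =>
    myAbove hl hA hsmall S.1 S.2)
  have key : ∀ (i : l.ord.ToType) (IH : ∀ j, j < i → X),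
      #{x | ∃ j, ∃ h : j < i, IH j h = x} < l := by
    intro i IH
    have hsub : {x | ∃ j, ∃ h : j < i, IH j h = x} ⊆ Set.range (fun p : Iio i => IH p.1 p.2) := by
      rintro x ⟨j, h, rfl⟩; exact ⟨⟨j, h⟩, rfl⟩
    exact ((mk_le_mk_of_subset hsub).trans mk_range_le).trans_lt (mk_Iio_ord_toType i)
  let F : ∀ i : l.ord.ToType, (∀ j, j < i → X) → X := fun i IH =>
    g ⟨_, key i IH⟩
  let f : l.ord.ToType → X := IsWellFounded.fix (· < ·) F
  have hfix : ∀ i, f i = g ⟨{x | ∃ j, ∃ h : j < i, f j = x}, key i fun j _ => f j⟩ :=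
    IsWellFounded.fix_eq (· < ·) F
  refine ⟨f, fun j i h => ?_⟩
  have h2 := (hg ⟨_, key i fun j _ => f j⟩).2 (f j) ⟨j, h, rfl⟩
  have hmem : ∀ k, f k ∈ A := fun k => by rw [hfix k]; exact (hg _).1
  rw [hfix i]
  exact h2 (hmem j)

theorem stmt19 (l : Cardinal.{u}) (hl : l.IsRegular) (X : Type u)
    [LinearOrder X] (hX : #X = l)
    (hY : ∃ Y : Set X, #Y = l ∧ ∀ y ∈ Y,
      (#{z ∈ Y | z < y} < l ∧ ¬ #{z ∈ Y | y < z} < l) ∨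
      (¬ #{z ∈ Y | z < y} < l ∧ #{z ∈ Y | y < z} < l)) :
    (∃ f : l.ord.ToType → X, StrictMono f) ∨
    (∃ f : l.ord.ToType → X, StrictAnti f) := by
  obtain ⟨Y, hYcard, hYside⟩ := hY
  set A : Set X := {y ∈ Y | #{z ∈ Y | z < y} < l} with hAdef
  set B : Set X := {y ∈ Y | #{z ∈ Y | y < z} < l} with hBdef
  have hYsub : Y ⊆ A ∪ B := by
    intro y hy
    rcases hYside y hy with ⟨h1, _⟩ | ⟨_, h2⟩
    · exact mem_union_left _ ⟨hy, h1⟩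
    · exact mem_union_right _ ⟨hy, h2⟩
  have hAle : #A ≤ l := hX ▸ Cardinal.mk_set_le A
  have hBle : #B ≤ l := hX ▸ Cardinal.mk_set_le B
  have hbig : #A = l ∨ #B = l := by
    by_contra hc
    push_neg at hc
    have h1 : #A < l := lt_of_le_of_ne hAle hc.1
    have h2 : #B < l := lt_of_le_of_ne hBle hc.2
    have : #(A ∪ B : Set X) < l := (mk_union_le _ _).trans_lt (add_lt_of_lt hl.1 h1 h2)
    exact absurd ((mk_le_mk_of_subset hYsub).trans_lt this) (by rw [hYcard]; exact lt_irrefl l)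
  rcases hbig with hbig | hbig
  · refine Or.inl (myMono hl hbig fun a ha => ?_)
    refine (mk_le_mk_of_subset ?_).trans_lt ha.2
    exact fun z hz => (⟨hz.1.1, hz.2⟩ : z ∈ {z ∈ Y | z < a})
  · refine Or.inr ?_
    set B' : Set Xᵒᵈ := OrderDual.ofDual ⁻¹' B with hB'
    have hB'card : #B' = l := hbig
    have hsmallB : ∀ a ∈ B', #{z ∈ B' | z < a} < l := by
      intro a ha
      have hsub : {z ∈ B' | z < a} ⊆
          OrderDual.ofDual ⁻¹' {z ∈ Y | OrderDual.ofDual a < z} := fun z hz => ⟨hz.1.1, hz.2⟩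
      exact (mk_le_mk_of_subset hsub).trans_lt (by exact ha.2)
    obtain ⟨f, hf⟩ := myMono hl hB'card hsmallB
    exact ⟨fun i => OrderDual.ofDual (f i), fun p q h => hf h⟩
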